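/- Let Y : ℤ×ℤ≥1 → [0,∞) be a family of weights and h : ℤ → ℝ, and assume that for every (m,n) ∈ ℤ×ℤ≥1 the supremum defining d^h(m,n) is finite. For n ≥ 1 let Yⁿ := (Y_{(m,n)})_{m∈ℤ}, set I⁰_i := h(i) − h(i−1) for i ∈ ℤ, and inductively define Iⁿ := D(Yⁿ, Iⁿ⁻¹) and Jⁿ := S(Yⁿ, Iⁿ⁻¹) for n ≥ 1. Then these recursions are well defined (all the suprema involved are finite) and for all n ≥ 1 and m ∈ ℤ, Iⁿ_m = d^h(m,n) − d^h(m−1,n) and Jⁿ_m = d^h(m,n) − d^h(m,n−1). -/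

import Mathlib

open Finset

/-- The number of steps of an up-right path from `x` to `y` (when `x ≤ y`). -/
def lppSteps (x y : ℤ × ℤ) : ℕ := ((y.1 - x.1) + (y.2 - x.2)).toNat

/-- `p` is an up-right path from `x` to `y`. -/
def IsUpRightPath (x y : ℤ × ℤ) (p : ℕ → ℤ × ℤ) : Prop :=
  p 0 = x ∧ p (lppSteps x y) = y ∧
    ∀ k : ℕ, k < lppSteps x y →
      p (k + 1) = p k + ((1 : ℤ), (0 : ℤ)) ∨ p (k + 1) = p k + ((0 : ℤ), (1 : ℤ))

/-- The weight of an up-right path from `x` to `y` (both endpoints included). -/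
noncomputable def pathWeight (Y : ℤ → ℤ → ℝ) (x y : ℤ × ℤ) (p : ℕ → ℤ × ℤ) : ℝ :=
  ∑ k ∈ Finset.range (lppSteps x y + 1), Y (p k).1 (p k).2

/-- The bulk last-passage time `d(x,y)`. -/
noncomputable def lpp (Y : ℤ → ℤ → ℝ) (x y : ℤ × ℤ) : ℝ :=
  sSup {v : ℝ | ∃ p : ℕ → ℤ × ℤ, IsUpRightPath x y p ∧ v = pathWeight Y x y p}

/-- Last-passage time with boundary data `h` on the line `n = 0`. -/
noncomputable def dh (Y : ℤ → ℤ → ℝ) (h : ℤ → ℝ) (m n : ℤ) : ℝ :=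
  if n = 0 then h m
  else sSup {v : ℝ | ∃ k : ℤ, k ≤ m ∧ v = h k + lpp Y (k, 1) (m, n)}

/-- The canonical antiderivative of a sequence `I : ℤ → ℝ`: the function `F` with
`F 0 = 0` and `F k − F (k−1) = I k` for all `k ∈ ℤ`. -/
noncomputable def Fcanon (I : ℤ → ℝ) (n : ℤ) : ℝ :=
  if 0 ≤ n then ∑ i ∈ Finset.Icc (1 : ℤ) n, I i
  else -∑ i ∈ Finset.Icc (n + 1) (0 : ℤ), I i

/-- `F̃_ℓ = sup_{k ≤ ℓ} {F_k + ∑_{i=k}^ℓ ω_i}` for the canonical `F` with increments `I`. -/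
noncomputable def Ftil (ω I : ℤ → ℝ) (l : ℤ) : ℝ :=
  sSup {v : ℝ | ∃ k : ℤ, k ≤ l ∧ v = Fcanon I k + ∑ i ∈ Finset.Icc k l, ω i}

/-- Queueing departure map: `D(ω,I)_ℓ = F̃_ℓ − F̃_{ℓ−1}`. -/
noncomputable def Dmap (ω I : ℤ → ℝ) (l : ℤ) : ℝ := Ftil ω I l - Ftil ω I (l - 1)

/-- Queueing sojourn map: `S(ω,I)_k = F̃_k − F_k`. -/
noncomputable def Smap (ω I : ℤ → ℝ) (k : ℤ) : ℝ := Ftil ω I k - Fcanon I k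

/-- The recursively defined increment sequences: `I⁰_i = h(i) − h(i−1)` and
`Iⁿ = D(Yⁿ, Iⁿ⁻¹)` where `Yⁿ` is the weight sequence on level `n`. -/
noncomputable def Iseq (Y : ℤ → ℤ → ℝ) (h : ℤ → ℝ) : ℕ → ℤ → ℝ
  | 0 => fun i => h i - h (i - 1)
  | n + 1 => Dmap (fun i => Y i ((n : ℤ) + 1)) (Iseq Y h n)

/-- `Jseq Y h n = S(Y^{n+1}, Iⁿ)`, i.e. the paper's `J^{n+1}`. -/
noncomputable def Jseq (Y : ℤ → ℤ → ℝ) (h : ℤ → ℝ) (n : ℕ) : ℤ → ℝ :=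
  Smap (fun i => Y i ((n : ℤ) + 1)) (Iseq Y h n)

namespace Aux13

lemma path_forward {x y : ℤ × ℤ} {p : ℕ → ℤ × ℤ} (hp : IsUpRightPath x y p) :
    ∀ k ≤ lppSteps x y, (p k).1 + (p k).2 = x.1 + x.2 + k ∧ x.1 ≤ (p k).1 ∧ x.2 ≤ (p k).2 := by
  intro k
  induction k with
  | zero => intro _; simp [hp.1]
  | succ k ih =>
    intro hk
    have hk' : k < lppSteps x y := by omega
    obtain ⟨hs, h1, h2⟩ := ih (le_of_lt hk')
    rcases hp.2.2 k hk' with hh | hh <;> rw [hh] <;>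
      refine ⟨?_, ?_, ?_⟩ <;> simp [Prod.fst_add, Prod.snd_add] <;> push_cast <;> omega

lemma path_mono {x y : ℤ × ℤ} {p : ℕ → ℤ × ℤ} (hp : IsUpRightPath x y p) :
    ∀ k l : ℕ, k ≤ l → l ≤ lppSteps x y → (p k).1 ≤ (p l).1 ∧ (p k).2 ≤ (p l).2 := by
  intro k l hkl
  induction l, hkl using Nat.le_induction with
  | base => intro _; exact ⟨le_refl _, le_refl _⟩
  | succ l hl ih =>
    intro hls
    obtain ⟨h1, h2⟩ := ih (by omega)
    rcases hp.2.2 l (by omega) with hh | hh <;> rw [hh] <;>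
      simp [Prod.fst_add, Prod.snd_add] <;> omega

lemma path_le {x y : ℤ × ℤ} {p : ℕ → ℤ × ℤ} (hp : IsUpRightPath x y p) :
    ∀ k ≤ lppSteps x y, (p k).1 ≤ y.1 ∧ (p k).2 ≤ y.2 := by
  intro k hk
  have := path_mono hp k (lppSteps x y) hk (le_refl _)
  rw [hp.2.1] at this
  exact this

lemma path_exists_le {x y : ℤ × ℤ} {p : ℕ → ℤ × ℤ} (hp : IsUpRightPath x y p) :
    x.1 ≤ y.1 ∧ x.2 ≤ y.2 := by
  have := path_forward hp (lppSteps x y) (le_refl _)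
  rw [hp.2.1] at this
  exact ⟨this.2.1, this.2.2⟩


lemma exists_path {x y : ℤ × ℤ} (h1 : x.1 ≤ y.1) (h2 : x.2 ≤ y.2) :
    ∃ p, IsUpRightPath x y p := by
  have hs : (lppSteps x y : ℤ) = (y.1 - x.1) + (y.2 - x.2) := by
    simp only [lppSteps]; omega
  refine ⟨fun k => if (k : ℤ) ≤ y.1 - x.1 then (x.1 + k, x.2) else (y.1, x.2 + ((k : ℤ) - (y.1 - x.1))), ?_, ?_, ?_⟩
  · simp; omega
  · simp only
    split_ifs with hc
    · rw [Prod.ext_iff]; constructor <;> simp <;> omega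
    · rw [Prod.ext_iff]; constructor <;> simp <;> omega
  · intro k hk
    have hk' : (k : ℤ) < (y.1 - x.1) + (y.2 - x.2) := by
      have : (k : ℤ) < (lppSteps x y : ℤ) := by exact_mod_cast hk
      omega
    simp only
    by_cases hc : (k : ℤ) + 1 ≤ y.1 - x.1
    · left
      rw [if_pos (by push_cast; omega), if_pos (by omega)]
      rw [Prod.ext_iff]; constructor <;> simp <;> push_cast <;> omega
    · right
      rw [if_neg (by push_cast; omega)]
      split_ifs with hc2
      · rw [Prod.ext_iff]; constructor <;> simp <;> push_cast <;> omega
      · rw [Prod.ext_iff]; constructor <;> simp <;> push_cast <;> omega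

lemma pathWeight_le_box {Y : ℤ → ℤ → ℝ} (hY : ∀ m n : ℤ, 1 ≤ n → 0 ≤ Y m n)
    {x y : ℤ × ℤ} (hx2 : 1 ≤ x.2) {p : ℕ → ℤ × ℤ} (hp : IsUpRightPath x y p) :
    pathWeight Y x y p ≤ ∑ q ∈ Finset.Icc x.1 y.1 ×ˢ Finset.Icc x.2 y.2, Y q.1 q.2 := by
  have himg : ∑ q ∈ (Finset.range (lppSteps x y + 1)).image p, Y q.1 q.2
      = ∑ k ∈ Finset.range (lppSteps x y + 1), Y (p k).1 (p k).2 :=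
    Finset.sum_image (fun a ha b hb hab => by
      have ha' := (path_forward hp a (Nat.lt_succ_iff.mp (Finset.mem_range.mp ha))).1
      have hb' := (path_forward hp b (Nat.lt_succ_iff.mp (Finset.mem_range.mp hb))).1
      rw [hab] at ha'; omega)
  rw [pathWeight, ← himg]
  apply Finset.sum_le_sum_of_subset_of_nonneg
  · intro q hq
    obtain ⟨k, hk, rfl⟩ := Finset.mem_image.mp hq
    have hk' : k ≤ lppSteps x y := Nat.lt_succ_iff.mp (Finset.mem_range.mp hk)
    have hf := path_forward hp k hk'
    have hl := path_le hp k hk'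
    simp only [Finset.mem_product, Finset.mem_Icc]
    exact ⟨⟨hf.2.1, hl.1⟩, hf.2.2, hl.2⟩
  · intro q hq _
    simp only [Finset.mem_product, Finset.mem_Icc] at hq
    exact hY _ _ (le_trans hx2 hq.2.1)

lemma bddAbove_pathSet {Y : ℤ → ℤ → ℝ} (hY : ∀ m n : ℤ, 1 ≤ n → 0 ≤ Y m n)
    {x y : ℤ × ℤ} (hx2 : 1 ≤ x.2) :
    BddAbove {v : ℝ | ∃ p : ℕ → ℤ × ℤ, IsUpRightPath x y p ∧ v = pathWeight Y x y p} := by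
  refine ⟨∑ q ∈ Finset.Icc x.1 y.1 ×ˢ Finset.Icc x.2 y.2, Y q.1 q.2, ?_⟩
  rintro v ⟨p, hp, rfl⟩
  exact pathWeight_le_box hY hx2 hp

lemma le_lpp {Y : ℤ → ℤ → ℝ} (hY : ∀ m n : ℤ, 1 ≤ n → 0 ≤ Y m n)
    {x y : ℤ × ℤ} (hx2 : 1 ≤ x.2) {p : ℕ → ℤ × ℤ} (hp : IsUpRightPath x y p) :
    pathWeight Y x y p ≤ lpp Y x y :=
  le_csSup (bddAbove_pathSet hY hx2) ⟨p, hp, rfl⟩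

lemma lpp_le {Y : ℤ → ℤ → ℝ} {x y : ℤ × ℤ} (h1 : x.1 ≤ y.1) (h2 : x.2 ≤ y.2) {c : ℝ}
    (hc : ∀ p : ℕ → ℤ × ℤ, IsUpRightPath x y p → pathWeight Y x y p ≤ c) :
    lpp Y x y ≤ c := by
  apply csSup_le
  · obtain ⟨p, hp⟩ := exists_path h1 h2
    exact ⟨_, p, hp, rfl⟩
  · rintro v ⟨p, hp, rfl⟩; exact hc p hp


lemma sum_range_eq_sum_Icc (f : ℤ → ℝ) {k m : ℤ} (hkm : k ≤ m) :
    ∑ j ∈ Finset.range ((m - k).toNat + 1), f (k + (j : ℤ)) = ∑ i ∈ Finset.Icc k m, f i := by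
  apply Finset.sum_bij' (i := fun (j : ℕ) _ => k + (j : ℤ)) (j := fun (i : ℤ) _ => (i - k).toNat)
  · intro a ha; simp only [Finset.mem_range] at ha; simp only [Finset.mem_Icc]; omega
  · intro a ha; simp only [Finset.mem_Icc] at ha; simp only [Finset.mem_range]; omega
  · intro a ha; simp only [Finset.mem_range] at ha; omega
  · intro a ha; simp only [Finset.mem_Icc] at ha; omega
  · intro a ha; rfl

lemma lpp_horizontal {Y : ℤ → ℤ → ℝ} (hY : ∀ m n : ℤ, 1 ≤ n → 0 ≤ Y m n)
    {k m n : ℤ} (hkm : k ≤ m) (hn : 1 ≤ n) :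
    lpp Y (k, n) (m, n) = ∑ i ∈ Finset.Icc k m, Y i n := by
  have hsteps : lppSteps (k, n) (m, n) = (m - k).toNat := by simp [lppSteps]
  have key : ∀ p : ℕ → ℤ × ℤ, IsUpRightPath (k, n) (m, n) p →
      pathWeight Y (k, n) (m, n) p = ∑ i ∈ Finset.Icc k m, Y i n := by
    intro p hp
    have hpt : ∀ j ≤ lppSteps (k, n) (m, n), p j = (k + (j : ℤ), n) := by
      intro j hj
      have hf := path_forward hp j hj
      have hl := path_le hp j hj
      simp only at hf hl
      have h2 : (p j).2 = n := le_antisymm hl.2 hf.2.2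
      have h1 : (p j).1 = k + (j : ℤ) := by omega
      exact Prod.ext h1 h2
    rw [pathWeight]
    rw [← sum_range_eq_sum_Icc (fun i => Y i n) hkm, hsteps]
    apply Finset.sum_congr rfl
    intro j hj
    rw [hpt j (by rw [hsteps]; exact Nat.lt_succ_iff.mp (Finset.mem_range.mp hj))]
  apply le_antisymm
  · exact lpp_le (x := (k, n)) (y := (m, n)) hkm (le_refl n) (fun p hp => le_of_eq (key p hp))
  · obtain ⟨p, hp⟩ := exists_path (x := (k, n)) (y := (m, n)) hkm (le_refl n)
    rw [← key p hp]
    exact le_lpp (x := (k, n)) (y := (m, n)) hY hn hp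


lemma lpp_concat {Y : ℤ → ℤ → ℝ} (hY : ∀ m n : ℤ, 1 ≤ n → 0 ≤ Y m n)
    {j k m n : ℤ} (hjk : j ≤ k) (hkm : k ≤ m) (hn : 1 ≤ n) :
    lpp Y (j, 1) (k, n) + ∑ i ∈ Finset.Icc k m, Y i (n + 1) ≤ lpp Y (j, 1) (m, n + 1) := by
  have hkey : ∀ q : ℕ → ℤ × ℤ, IsUpRightPath (j,1) (k,n) q →
      pathWeight Y (j,1) (k,n) q + ∑ i ∈ Finset.Icc k m, Y i (n+1) ≤ lpp Y (j,1) (m,n+1) := by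
    intro q hq
    set s' := lppSteps (j,1) (k,n) with hs'
    set s'' := lppSteps (j,1) (m,n+1) with hs''
    have hs'v : (s' : ℤ) = (k - j) + (n - 1) := by
      rw [hs']; simp only [lppSteps]; omega
    have hs''v : (s'' : ℤ) = (m - j) + n := by
      rw [hs'']; simp only [lppSteps]; omega
    set p : ℕ → ℤ × ℤ := fun i => if i ≤ s' then q i else (k + ((i:ℤ) - (s':ℤ) - 1), n+1) with hpdef
    have hp : IsUpRightPath (j,1) (m,n+1) p := by
      refine ⟨?_, ?_, ?_⟩
      · rw [hpdef]; simp only [if_pos (Nat.zero_le s')]; exact hq.1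
      · rw [hpdef]; simp only
        rw [if_neg (by omega), Prod.ext_iff]
        constructor <;> simp <;> omega
      · intro i hi
        rw [← hs''] at hi
        rw [hpdef]; simp only
        rcases lt_trichotomy i s' with hc | hc | hc
        · rw [if_pos (by omega), if_pos (by omega)]
          exact hq.2.2 i (by omega)
        · rw [if_neg (by omega), if_pos (by omega), hc, hq.2.1]
          right; rw [Prod.ext_iff]; constructor <;> simp <;> push_cast <;> omega
        · rw [if_neg (by omega), if_neg (by omega)]
          left; rw [Prod.ext_iff]; constructor <;> simp <;> push_cast <;> omega
    have hsplit : pathWeight Y (j,1) (m,n+1) p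
        = pathWeight Y (j,1) (k,n) q + ∑ i ∈ Finset.Icc k m, Y i (n+1) := by
      rw [pathWeight, pathWeight, ← hs', ← hs'']
      rw [Finset.range_eq_Ico, ← Finset.sum_Ico_consecutive _ (Nat.zero_le (s'+1)) (by omega : s'+1 ≤ s''+1)]
      congr 1
      · rw [← Finset.range_eq_Ico]
        apply Finset.sum_congr rfl
        intro i hi
        have hi' : i ≤ s' := Nat.lt_succ_iff.mp (Finset.mem_range.mp hi)
        rw [hpdef]; simp only [if_pos hi']
      · rw [Finset.sum_Ico_eq_sum_range]
        have hlen : s'' + 1 - (s' + 1) = (m - k).toNat + 1 := by omega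
        rw [hlen, ← sum_range_eq_sum_Icc (fun i => Y i (n+1)) hkm]
        apply Finset.sum_congr rfl
        intro a ha
        rw [hpdef]; simp only [if_neg (by omega : ¬ (s' + 1 + a ≤ s'))]
        congr 1
        push_cast
        ring
    have := le_lpp (x := (j,1)) (y := (m, n+1)) hY (le_refl 1) hp
    rw [hsplit] at this
    exact this
  have hne : {v : ℝ | ∃ q : ℕ → ℤ × ℤ, IsUpRightPath (j,1) (k,n) q ∧ v = pathWeight Y (j,1) (k,n) q}.Nonempty := by
    obtain ⟨q, hq⟩ := exists_path (x := (j,1)) (y := (k,n)) hjk hn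
    exact ⟨_, q, hq, rfl⟩
  have hle : lpp Y (j,1) (k,n) ≤ lpp Y (j,1) (m,n+1) - ∑ i ∈ Finset.Icc k m, Y i (n+1) := by
    rw [lpp]
    apply csSup_le hne
    rintro v ⟨q, hq, rfl⟩
    linarith [hkey q hq]
  linarith


lemma path_decomp {Y : ℤ → ℤ → ℝ} (hY : ∀ m n : ℤ, 1 ≤ n → 0 ≤ Y m n)
    {j m n : ℤ} (hn : 1 ≤ n) {p : ℕ → ℤ × ℤ} (hp : IsUpRightPath (j,1) (m,n+1) p) :
    ∃ k : ℤ, j ≤ k ∧ k ≤ m ∧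
      pathWeight Y (j,1) (m,n+1) p ≤ lpp Y (j,1) (k,n) + ∑ i ∈ Finset.Icc k m, Y i (n+1) := by
  set s := lppSteps (j,1) (m,n+1) with hs
  have hsv : (s : ℤ) = (m - j) + n := by
    rw [hs]; simp only [lppSteps]
    have hjm : j ≤ m := (path_exists_le hp).1
    omega
  have hex : ∃ t, (p t).2 = n + 1 ∧ t ≤ s := ⟨s, by rw [hp.2.1], le_refl _⟩
  classical
  set t := Nat.find hex with htdef
  obtain ⟨ht2, hts⟩ := Nat.find_spec hex
  rw [← htdef] at ht2 hts
  have hmin : ∀ u, u < t → ¬ ((p u).2 = n + 1 ∧ u ≤ s) := fun u hu => Nat.find_min hex hu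
  have ht1 : 1 ≤ t := by
    rcases Nat.eq_zero_or_pos t with h0 | h0
    · rw [h0] at ht2
      rw [hp.1] at ht2
      simp at ht2; omega
    · exact h0
  have htm1 : t - 1 < s := by omega
  have hstep := hp.2.2 (t - 1) htm1
  rw [show t - 1 + 1 = t by omega] at hstep
  have hpt1 : (p (t-1)).2 ≠ n + 1 := fun hc => hmin (t-1) (by omega) ⟨hc, by omega⟩
  have hstep2 : p t = p (t-1) + ((0:ℤ), (1:ℤ)) := by
    rcases hstep with hh | hh
    · exfalso; apply hpt1
      rw [hh] at ht2; simpa using ht2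
    · exact hh
  have hk1 : (p (t-1)).1 = (p t).1 := by rw [hstep2]; simp
  have hk2 : (p (t-1)).2 = n := by
    have : (p t).2 = (p (t-1)).2 + 1 := by rw [hstep2]; simp
    omega
  set k := (p t).1 with hkdef
  have hfor := path_forward hp t hts
  have hlee := path_le hp t hts
  simp only at hfor hlee
  have hjk : j ≤ k := hfor.2.1
  have hkm : k ≤ m := hlee.1
  have hksum : k + (n + 1) = j + 1 + (t : ℤ) := by rw [hkdef]; rw [← ht2]; exact hfor.1
  have hsteps' : lppSteps (j,1) (k,n) = t - 1 := by
    simp only [lppSteps]; omega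
  have hq : IsUpRightPath (j,1) (k,n) p := by
    refine ⟨hp.1, ?_, ?_⟩
    · rw [hsteps', Prod.ext_iff]
      exact ⟨by rw [hk1], hk2⟩
    · intro kk hkk
      rw [hsteps'] at hkk
      exact hp.2.2 kk (by omega)
  have hupper : ∀ i, t ≤ i → i ≤ s → p i = (k + ((i : ℤ) - t), n + 1) := by
    intro i hti his
    have hmono := path_mono hp t i hti his
    have hle2 := (path_le hp i his).2
    simp only at hle2
    have h2 : (p i).2 = n + 1 := by
      have := hmono.2
      rw [ht2] at this
      omega
    have hfi := (path_forward hp i his).1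
    simp only at hfi
    rw [Prod.ext_iff]
    exact ⟨by simp only at hfi ⊢; omega, h2⟩
  have hsplit : pathWeight Y (j,1) (m,n+1) p
      = pathWeight Y (j,1) (k,n) p + ∑ i ∈ Finset.Icc k m, Y i (n+1) := by
    rw [pathWeight, pathWeight, ← hs, hsteps']
    rw [Finset.range_eq_Ico, ← Finset.sum_Ico_consecutive _ (Nat.zero_le t) (by omega : t ≤ s+1)]
    congr 1
    · rw [← Finset.range_eq_Ico]
      apply Finset.sum_congr (by congr 1; omega) (fun _ _ => rfl)
    · rw [Finset.sum_Ico_eq_sum_range]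
      have hlen : s + 1 - t = (m - k).toNat + 1 := by omega
      rw [hlen, ← sum_range_eq_sum_Icc (fun i => Y i (n+1)) hkm]
      apply Finset.sum_congr rfl
      intro a ha
      have hmem : a < (m - k).toNat + 1 := Finset.mem_range.mp ha
      rw [hupper (t + a) (by omega) (by omega)]
      have harg : k + ((↑(t + a) : ℤ) - ↑t) = k + ↑a := by push_cast; ring
      simp only [harg]
  refine ⟨k, hjk, hkm, ?_⟩
  rw [hsplit]
  have := le_lpp (x := (j,1)) (y := (k,n)) hY (le_refl 1) hq
  linarith



variable {Y : ℤ → ℤ → ℝ} {h : ℤ → ℝ}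

lemma dh_set_nonempty {m n : ℤ} :
    {v : ℝ | ∃ k : ℤ, k ≤ m ∧ v = h k + lpp Y (k, 1) (m, n)}.Nonempty :=
  ⟨_, m, le_refl m, rfl⟩

lemma le_dh (hfin : ∀ m n : ℤ, 1 ≤ n →
      BddAbove {v : ℝ | ∃ k : ℤ, k ≤ m ∧ v = h k + lpp Y (k, 1) (m, n)})
    {k m n : ℤ} (hn : 1 ≤ n) (hkm : k ≤ m) :
    h k + lpp Y (k, 1) (m, n) ≤ dh Y h m n := by
  rw [dh, if_neg (by omega)]
  exact le_csSup (hfin m n hn) ⟨k, hkm, rfl⟩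

lemma dh_le {m n : ℤ} (hn : 1 ≤ n) {c : ℝ}
    (hc : ∀ k : ℤ, k ≤ m → h k + lpp Y (k, 1) (m, n) ≤ c) :
    dh Y h m n ≤ c := by
  rw [dh, if_neg (by omega)]
  exact csSup_le dh_set_nonempty (by rintro v ⟨k, hk, rfl⟩; exact hc k hk)

lemma dh_rec (hY : ∀ m n : ℤ, 1 ≤ n → 0 ≤ Y m n)
    (hfin : ∀ m n : ℤ, 1 ≤ n →
      BddAbove {v : ℝ | ∃ k : ℤ, k ≤ m ∧ v = h k + lpp Y (k, 1) (m, n)})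
    (n : ℕ) (m : ℤ) :
    (∀ v ∈ {v : ℝ | ∃ k : ℤ, k ≤ m ∧
        v = dh Y h k (n : ℤ) + ∑ i ∈ Finset.Icc k m, Y i ((n : ℤ) + 1)},
      v ≤ dh Y h m ((n : ℤ) + 1)) ∧
    dh Y h m ((n : ℤ) + 1) = sSup {v : ℝ | ∃ k : ℤ, k ≤ m ∧
        v = dh Y h k (n : ℤ) + ∑ i ∈ Finset.Icc k m, Y i ((n : ℤ) + 1)} := by
  rcases Nat.eq_zero_or_pos n with h0 | hn1
  · subst h0
    push_cast
    have hseteq : {v : ℝ | ∃ k : ℤ, k ≤ m ∧ v = dh Y h k 0 + ∑ i ∈ Finset.Icc k m, Y i 1}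
        = {v : ℝ | ∃ k : ℤ, k ≤ m ∧ v = h k + lpp Y (k, 1) (m, 1)} := by
      ext v
      simp only [Set.mem_setOf_eq]
      constructor
      · rintro ⟨k, hk, rfl⟩
        exact ⟨k, hk, by rw [dh, if_pos rfl, lpp_horizontal hY hk (le_refl 1)]⟩
      · rintro ⟨k, hk, rfl⟩
        exact ⟨k, hk, by rw [dh, if_pos rfl, lpp_horizontal hY hk (le_refl 1)]⟩
    constructor
    · intro v hv
      rw [hseteq] at hv
      rw [dh, if_neg one_ne_zero]
      exact le_csSup (hfin m 1 (le_refl 1)) hv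
    · rw [hseteq, dh, if_neg one_ne_zero]
  · have hnz : (1:ℤ) ≤ (n:ℤ) := by exact_mod_cast hn1
    have c1 : ∀ v ∈ {v : ℝ | ∃ k : ℤ, k ≤ m ∧
        v = dh Y h k (n : ℤ) + ∑ i ∈ Finset.Icc k m, Y i ((n : ℤ) + 1)},
        v ≤ dh Y h m ((n : ℤ) + 1) := by
      rintro v ⟨k, hk, rfl⟩
      have : dh Y h k (n : ℤ) ≤ dh Y h m ((n:ℤ) + 1) - ∑ i ∈ Finset.Icc k m, Y i ((n:ℤ)+1) := by
        apply dh_le hnz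
        intro j hj
        have := lpp_concat hY hj hk hnz
        have h2 := le_dh (Y := Y) (h := h) (n := (n:ℤ)+1) hfin (by omega) (le_trans hj hk)
        linarith
      linarith
    refine ⟨c1, ?_⟩
    have hBne : {v : ℝ | ∃ k : ℤ, k ≤ m ∧
        v = dh Y h k (n : ℤ) + ∑ i ∈ Finset.Icc k m, Y i ((n : ℤ) + 1)}.Nonempty :=
      ⟨_, m, le_refl m, rfl⟩
    have hBbdd : BddAbove {v : ℝ | ∃ k : ℤ, k ≤ m ∧
        v = dh Y h k (n : ℤ) + ∑ i ∈ Finset.Icc k m, Y i ((n : ℤ) + 1)} :=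
      ⟨dh Y h m ((n:ℤ)+1), fun v hv => c1 v hv⟩
    apply le_antisymm
    · apply dh_le (by omega)
      intro j hj
      have hpaths : lpp Y (j,1) (m, (n:ℤ)+1) ≤ sSup {v : ℝ | ∃ k : ℤ, k ≤ m ∧
          v = dh Y h k (n : ℤ) + ∑ i ∈ Finset.Icc k m, Y i ((n : ℤ) + 1)} - h j := by
        apply lpp_le (x := (j,1)) (y := (m, (n:ℤ)+1)) hj (by omega)
        intro p hp
        obtain ⟨k, hjk, hkm, hple⟩ := path_decomp hY hnz hp
        have h1 := le_dh hfin hnz hjk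
        have h2 : dh Y h k (n:ℤ) + ∑ i ∈ Finset.Icc k m, Y i ((n:ℤ)+1)
            ≤ sSup {v : ℝ | ∃ k : ℤ, k ≤ m ∧
              v = dh Y h k (n : ℤ) + ∑ i ∈ Finset.Icc k m, Y i ((n : ℤ) + 1)} :=
          le_csSup hBbdd ⟨k, hkm, rfl⟩
        linarith
      linarith
    · exact csSup_le hBne c1


lemma Fcanon_zero (I : ℤ → ℝ) : Fcanon I 0 = 0 := by
  rw [Fcanon, if_pos (le_refl 0), Finset.Icc_eq_empty (by omega), Finset.sum_empty]

lemma Fcanon_succ (I : ℤ → ℝ) (n : ℤ) : Fcanon I (n + 1) = Fcanon I n + I (n + 1) := by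
  rcases le_or_gt 0 n with h0 | h0
  · rw [Fcanon, Fcanon, if_pos (by omega), if_pos h0]
    have hins : Finset.Icc (1:ℤ) (n+1) = insert (n+1) (Finset.Icc (1:ℤ) n) := by
      ext x; simp only [Finset.mem_Icc, Finset.mem_insert]; omega
    rw [hins, Finset.sum_insert (by simp only [Finset.mem_Icc]; omega)]
    ring
  · rcases le_or_gt 0 (n + 1) with h1 | h1
    · have hn : n = -1 := by omega
      subst hn
      rw [show (-1:ℤ) + 1 = 0 by ring, Fcanon_zero, Fcanon, if_neg (by omega)]
      rw [show (-1:ℤ) + 1 = 0 by ring, Finset.Icc_self, Finset.sum_singleton]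
      ring
    · rw [Fcanon, Fcanon, if_neg (by omega), if_neg (by omega)]
      have hins : Finset.Icc (n+1) (0:ℤ) = insert (n+1) (Finset.Icc (n+1+1) (0:ℤ)) := by
        ext x; simp only [Finset.mem_Icc, Finset.mem_insert]; omega
      rw [hins, Finset.sum_insert (by simp only [Finset.mem_Icc]; omega)]
      ring

lemma Fcanon_eq {I : ℤ → ℝ} {G : ℤ → ℝ} (hG : ∀ i, I i = G i - G (i - 1)) :
    ∀ k : ℤ, Fcanon I k = G k - G 0 := by
  intro k
  induction k using Int.induction_on with
  | zero => rw [Fcanon_zero]; ring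
  | succ i ih =>
    rw [Fcanon_succ, ih, hG ((i : ℤ) + 1), show ((i : ℤ) + 1) - 1 = (i : ℤ) by ring]
    ring
  | pred i ih =>
    have hs := Fcanon_succ I (-(i : ℤ) - 1)
    rw [show -(i:ℤ) - 1 + 1 = -(i:ℤ) by ring] at hs
    rw [ih] at hs
    have hg := hG (-(i:ℤ))
    rw [show -(i:ℤ) - 1 = -((i:ℤ)+1) by ring] at hs hg ⊢
    linarith

lemma sSup_shift {P : ℤ → Prop} {f : ℤ → ℝ} (c : ℝ) (hne : ∃ k, P k)
    (hbdd : BddAbove {v : ℝ | ∃ k, P k ∧ v = f k}) :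
    sSup {v : ℝ | ∃ k, P k ∧ v = f k - c} = sSup {v : ℝ | ∃ k, P k ∧ v = f k} - c := by
  obtain ⟨k0, hk0⟩ := hne
  have hbdd' : BddAbove {v : ℝ | ∃ k, P k ∧ v = f k - c} := by
    obtain ⟨b, hb⟩ := hbdd
    refine ⟨b - c, ?_⟩
    rintro v ⟨k, hk, rfl⟩
    have := hb ⟨k, hk, rfl⟩
    simp only [sub_le_sub_iff_right]
    exact this
  have hne1 : {v : ℝ | ∃ k, P k ∧ v = f k - c}.Nonempty := ⟨f k0 - c, k0, hk0, rfl⟩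
  have hne2 : {v : ℝ | ∃ k, P k ∧ v = f k}.Nonempty := ⟨f k0, k0, hk0, rfl⟩
  apply le_antisymm
  · apply csSup_le hne1
    rintro v ⟨k, hk, rfl⟩
    have hmem : f k ∈ {v : ℝ | ∃ k, P k ∧ v = f k} := ⟨k, hk, rfl⟩
    have := le_csSup hbdd hmem
    linarith
  · rw [sub_le_iff_le_add]
    apply csSup_le hne2
    rintro v ⟨k, hk, rfl⟩
    have hmem : f k - c ∈ {v : ℝ | ∃ k, P k ∧ v = f k - c} := ⟨k, hk, rfl⟩
    have := le_csSup hbdd' hmem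
    linarith


lemma Ftil_eq {Y : ℤ → ℤ → ℝ} {h : ℤ → ℝ} (hY : ∀ m n : ℤ, 1 ≤ n → 0 ≤ Y m n)
    (hfin : ∀ m n : ℤ, 1 ≤ n →
      BddAbove {v : ℝ | ∃ k : ℤ, k ≤ m ∧ v = h k + lpp Y (k, 1) (m, n)})
    (n : ℕ) (hF : ∀ k : ℤ, Fcanon (Iseq Y h n) k = dh Y h k (n:ℤ) - dh Y h 0 (n:ℤ)) (l : ℤ) :
    Ftil (fun i => Y i ((n:ℤ)+1)) (Iseq Y h n) l = dh Y h l ((n:ℤ)+1) - dh Y h 0 (n:ℤ) := by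
  rw [Ftil]
  have hset : {v : ℝ | ∃ k, k ≤ l ∧ v = Fcanon (Iseq Y h n) k + ∑ i ∈ Finset.Icc k l, Y i ((n:ℤ)+1)}
      = {v : ℝ | ∃ k, k ≤ l ∧
          v = (dh Y h k (n:ℤ) + ∑ i ∈ Finset.Icc k l, Y i ((n:ℤ)+1)) - dh Y h 0 (n:ℤ)} := by
    ext v
    constructor
    · rintro ⟨k, hk, rfl⟩; exact ⟨k, hk, by rw [hF k]; ring⟩
    · rintro ⟨k, hk, rfl⟩; exact ⟨k, hk, by rw [hF k]; ring⟩
  rw [hset]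
  have hrec := dh_rec (h := h) hY hfin n l
  have hbdd : BddAbove {v : ℝ | ∃ k, k ≤ l ∧
      v = dh Y h k (n:ℤ) + ∑ i ∈ Finset.Icc k l, Y i ((n:ℤ)+1)} :=
    ⟨_, fun v hv => hrec.1 v hv⟩
  rw [sSup_shift (P := fun k => k ≤ l)
      (f := fun k => dh Y h k (n:ℤ) + ∑ i ∈ Finset.Icc k l, Y i ((n:ℤ)+1)) _ ⟨l, le_refl l⟩ hbdd,
    ← hrec.2]

lemma Fcanon_dh {Y : ℤ → ℤ → ℝ} {h : ℤ → ℝ} (hY : ∀ m n : ℤ, 1 ≤ n → 0 ≤ Y m n)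
    (hfin : ∀ m n : ℤ, 1 ≤ n →
      BddAbove {v : ℝ | ∃ k : ℤ, k ≤ m ∧ v = h k + lpp Y (k, 1) (m, n)}) :
    ∀ n : ℕ, ∀ k : ℤ, Fcanon (Iseq Y h n) k = dh Y h k (n:ℤ) - dh Y h 0 (n:ℤ) := by
  intro n
  induction n with
  | zero =>
    intro k
    have hG : ∀ i : ℤ, Iseq Y h 0 i = h i - h (i - 1) := fun i => rfl
    rw [Fcanon_eq (G := h) hG k]
    simp [dh]
  | succ n ih =>
    intro k
    have hstep : ∀ i : ℤ, Iseq Y h (n+1) i = dh Y h i ((n:ℤ)+1) - dh Y h (i-1) ((n:ℤ)+1) := by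
      intro i
      show Dmap (fun i => Y i ((n:ℤ)+1)) (Iseq Y h n) i = _
      rw [Dmap, Ftil_eq hY hfin n ih i, Ftil_eq hY hfin n ih (i-1)]
      ring
    have hcast : ((n+1 : ℕ) : ℤ) = (n:ℤ)+1 := by push_cast; ring
    rw [Fcanon_eq (G := fun i => dh Y h i ((n:ℤ)+1)) hstep k, hcast]

end Aux13

/-- The queueing construction of the half-plane LPP with boundary: the recursions for
`Iⁿ` and `Jⁿ` are well defined (all the suprema involved are bounded above), and for
all `n ≥ 1`, `m ∈ ℤ`: `Iⁿ_m = d^h(m,n) − d^h(m−1,n)` and `Jⁿ_m = d^h(m,n) − d^h(m,n−1)`. -/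
theorem stmt13 (Y : ℤ → ℤ → ℝ) (hY : ∀ m n : ℤ, 1 ≤ n → 0 ≤ Y m n)
    (h : ℤ → ℝ)
    (hfin : ∀ m n : ℤ, 1 ≤ n →
      BddAbove {v : ℝ | ∃ k : ℤ, k ≤ m ∧ v = h k + lpp Y (k, 1) (m, n)}) :
    (∀ n : ℕ, ∀ l : ℤ,
      BddAbove {v : ℝ | ∃ k : ℤ, k ≤ l ∧
        v = Fcanon (Iseq Y h n) k + ∑ i ∈ Finset.Icc k l, Y i ((n : ℤ) + 1)}) ∧
    (∀ n : ℕ, ∀ m : ℤ,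
      Iseq Y h (n + 1) m = dh Y h m ((n : ℤ) + 1) - dh Y h (m - 1) ((n : ℤ) + 1) ∧
      Jseq Y h n m = dh Y h m ((n : ℤ) + 1) - dh Y h m (n : ℤ)) := by
  constructor
  · intro n l
    refine ⟨dh Y h l ((n:ℤ)+1) - dh Y h 0 (n:ℤ), ?_⟩
    rintro v ⟨k, hk, rfl⟩
    rw [Aux13.Fcanon_dh hY hfin n k]
    have := (Aux13.dh_rec (h := h) hY hfin n l).1 _ ⟨k, hk, rfl⟩
    linarith
  · intro n m
    constructor
    · show Dmap (fun i => Y i ((n:ℤ)+1)) (Iseq Y h n) m = _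
      rw [Dmap, Aux13.Ftil_eq hY hfin n (Aux13.Fcanon_dh hY hfin n) m,
        Aux13.Ftil_eq hY hfin n (Aux13.Fcanon_dh hY hfin n) (m-1)]
      ring
    · rw [Jseq, Smap, Aux13.Ftil_eq hY hfin n (Aux13.Fcanon_dh hY hfin n) m,
        Aux13.Fcanon_dh hY hfin n m]
      ring
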